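/- arXiv:2206.02383 — 4 statements merged into one kernel-verified Lean document; each statement's English description precedes it below -/
import Mathlib

section
/- Let n ≥ 1 be an integer and L > 0. Define f : [0,1]^n → ℝ by f(x) = L·min(‖x‖, 1/2), where ‖·‖ is the Euclidean norm. Then: (i) f is L-Lipschitz on [0,1]^n; (ii) min_{x ∈ [0,1]^n} f(x) = 0, attained at the origin; and (iii) for every integer m ≥ 1, the average regret of grid search satisfies (1/m^n)·Σ_{g ∈ G_m} f(g) − min_{x∈[0,1]^n} f(x) ≥ L/8, where G_m is the uniform grid of the m^n cube centers. In particular, the average regret of grid search does not converge to 0 as the number of queries grows. -/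
open scoped BigOperators

/-- The unit cube `[0,1]^n` in Euclidean space. -/
def unitCube (n : ℕ) : Set (EuclideanSpace ℝ (Fin n)) :=
  {x | ∀ i, x i ∈ Set.Icc (0 : ℝ) 1}

/-- The grid center of the subcube indexed by `k : Fin n → Fin m`, i.e. the point
with coordinates `(2 kᵢ + 1)/(2m)`. -/
noncomputable def gridCenter (n m : ℕ) (k : Fin n → Fin m) : EuclideanSpace ℝ (Fin n) :=
  (WithLp.equiv 2 (Fin n → ℝ)).symm fun i => (2 * ((k i : ℕ) : ℝ) + 1) / (2 * m)

lemma grid_sum_coord (n : ℕ) (hn : 1 ≤ n) (m : ℕ) (hm : 1 ≤ m) :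
    ∑ k : Fin n → Fin m, ((2 * ((k ⟨0, hn⟩ : ℕ) : ℝ) + 1) / (2 * m))
      = (m : ℝ) ^ (n - 1) * ((m : ℝ) / 2) := by
  classical
  set i₀ : Fin n := ⟨0, hn⟩
  have hm0 : (m : ℝ) ≠ 0 := by positivity
  rw [Fintype.sum_equiv (Equiv.piSplitAt i₀ (fun _ => Fin m))
    (fun k => (2 * ((k i₀ : ℕ) : ℝ) + 1) / (2 * m))
    (fun p => (2 * ((p.1 : ℕ) : ℝ) + 1) / (2 * m)) (fun k => rfl)]
  rw [Fintype.sum_prod_type]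
  simp only [Finset.sum_const, Finset.card_univ, nsmul_eq_mul]
  have hcard : (Fintype.card ({ j // j ≠ i₀ } → Fin m) : ℝ) = (m:ℝ) ^ (n-1) := by
    rw [Fintype.card_fun]
    simp [Fintype.card_subtype_compl, Fintype.card_subtype_eq]
  have hsum1 : ∑ a : Fin m, (2 * ((a : ℕ) : ℝ) + 1) = (m:ℝ)^2 := by
    rw [Finset.sum_add_distrib, ← Finset.mul_sum,
      Fin.sum_univ_eq_sum_range (fun i => ((i:ℕ):ℝ)) m]
    simp only [Finset.sum_const, Finset.card_univ, Fintype.card_fin, nsmul_eq_mul, mul_one]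
    have h2 := Finset.sum_range_id_mul_two m
    have h2' : (∑ i ∈ Finset.range m, (i:ℝ)) * 2 = (m:ℝ) * ((m:ℝ) - 1) := by
      have h3 := congrArg (Nat.cast : ℕ → ℝ) h2
      push_cast [Nat.cast_sub hm] at h3
      linarith
    nlinarith [h2']
  simp only [hcard]
  rw [← Finset.mul_sum, ← Finset.sum_div, hsum1]
  field_simp

/-- The function `f(x) = L·min(‖x‖, 1/2)` is `L`-Lipschitz on `[0,1]^n`, attains its
minimum value `0` at the origin, and the average regret of grid search on it is at
least `L/8` for every grid size `m`; hence the average regret of grid search does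
not converge to `0`. -/
theorem grid_search_average_regret_lower_bound (n : ℕ) (hn : 1 ≤ n)
    (L : ℝ) (hL : 0 < L) (f : EuclideanSpace ℝ (Fin n) → ℝ)
    (hfdef : ∀ x, f x = L * min ‖x‖ (1 / 2)) :
    (∀ x ∈ unitCube n, ∀ y ∈ unitCube n, |f x - f y| ≤ L * ‖x - y‖)
      ∧ ((0 : EuclideanSpace ℝ (Fin n)) ∈ unitCube n ∧ f 0 = 0
          ∧ ∀ x ∈ unitCube n, 0 ≤ f x)
      ∧ (∀ m : ℕ, 1 ≤ m →
          L / 8 ≤ (1 / (m : ℝ) ^ n) * ∑ k : Fin n → Fin m, f (gridCenter n m k)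
                    - sInf (f '' unitCube n)) := by
  have hf0 : f 0 = 0 := by simp [hfdef]
  have hnonneg : ∀ x, 0 ≤ f x := by
    intro x; rw [hfdef]; positivity
  have hmem0 : (0 : EuclideanSpace ℝ (Fin n)) ∈ unitCube n := by
    intro i; constructor <;> norm_num
  have hinf : sInf (f '' unitCube n) = 0 := by
    apply le_antisymm
    · exact csInf_le ⟨0, by rintro y ⟨x, -, rfl⟩; exact hnonneg x⟩ ⟨0, hmem0, hf0⟩
    · exact le_csInf ⟨0, 0, hmem0, hf0⟩ (by rintro y ⟨x, -, rfl⟩; exact hnonneg x)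
  refine ⟨?_, ⟨hmem0, hf0, fun x _ => hnonneg x⟩, ?_⟩
  · intro x _ y _
    rw [hfdef, hfdef, ← mul_sub, abs_mul, abs_of_pos hL]
    refine mul_le_mul_of_nonneg_left ?_ hL.le
    calc |min ‖x‖ (1/2) - min ‖y‖ (1/2)| ≤ max |‖x‖ - ‖y‖| |(1/2 : ℝ) - 1/2| :=
          abs_min_sub_min_le_max _ _ _ _
      _ ≤ ‖x - y‖ := by
          rw [sub_self, abs_zero]
          exact max_le (abs_norm_sub_norm_le x y) (norm_nonneg _)
  · intro m hm
    rw [hinf, sub_zero]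
    have hm0 : (0:ℝ) < m := by exact_mod_cast hm
    set i₀ : Fin n := ⟨0, hn⟩
    -- pointwise lower bound
    have hpt : ∀ k : Fin n → Fin m,
        L / 2 * ((2 * ((k i₀ : ℕ) : ℝ) + 1) / (2 * m)) ≤ f (gridCenter n m k) := by
      intro k
      set c : ℝ := (2 * ((k i₀ : ℕ) : ℝ) + 1) / (2 * m) with hc
      have hc0 : 0 ≤ c := by positivity
      have hc1 : c ≤ 1 := by
        rw [hc, div_le_one (by positivity)]
        have : ((k i₀ : ℕ) : ℝ) ≤ (m : ℝ) - 1 := by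
          have := (k i₀).is_lt
          have : ((k i₀ : ℕ) : ℝ) < (m : ℝ) := by exact_mod_cast this
          linarith [Nat.lt_iff_add_one_le.mp (k i₀).is_lt,
            (by exact_mod_cast Nat.lt_iff_add_one_le.mp (k i₀).is_lt :
              ((k i₀ : ℕ) : ℝ) + 1 ≤ (m:ℝ))]
        linarith
      have hnorm : c ≤ ‖gridCenter n m k‖ := by
        rw [EuclideanSpace.norm_eq]
        have h1 : c ^ 2 ≤ ∑ i, ‖gridCenter n m k i‖ ^ 2 := by
          have : c ^ 2 = ‖gridCenter n m k i₀‖ ^ 2 := by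
            rw [gridCenter]
            simp only [WithLp.equiv_symm_apply, WithLp.ofLp_toLp]
            rw [Real.norm_eq_abs, sq_abs]
          rw [this]
          exact Finset.single_le_sum (f := fun i => ‖gridCenter n m k i‖ ^ 2)
            (fun i _ => by positivity) (Finset.mem_univ i₀)
        calc c = Real.sqrt (c ^ 2) := by rw [Real.sqrt_sq hc0]
          _ ≤ _ := Real.sqrt_le_sqrt h1
      have hmin : c / 2 ≤ min ‖gridCenter n m k‖ (1/2) := by
        rcases le_total c (1/2) with h | h
        · exact le_min (le_trans (by linarith) hnorm) (by linarith)
        · exact le_min (le_trans (by linarith) hnorm) (by linarith)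
      rw [hfdef]
      calc L / 2 * c = L * (c / 2) := by ring
        _ ≤ L * min ‖gridCenter n m k‖ (1/2) := by
            exact mul_le_mul_of_nonneg_left hmin hL.le
    have hsum : ∑ k : Fin n → Fin m, L / 2 * ((2 * ((k i₀ : ℕ) : ℝ) + 1) / (2 * m))
        ≤ ∑ k : Fin n → Fin m, f (gridCenter n m k) :=
      Finset.sum_le_sum fun k _ => hpt k
    rw [← Finset.mul_sum, grid_sum_coord n hn m hm] at hsum
    have hpow : (m : ℝ) ^ (n - 1) * (m : ℝ) = (m : ℝ) ^ n := by
      rw [← pow_succ, Nat.sub_add_cancel hn]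
    have hmn : (0:ℝ) < (m:ℝ) ^ n := by positivity
    have : L / 2 * ((m : ℝ) ^ (n - 1) * ((m : ℝ) / 2)) = L / 4 * (m:ℝ)^n := by
      rw [← hpow]; ring
    rw [this] at hsum
    have h4 : L / 4 ≤ (1 / (m : ℝ) ^ n) * ∑ k : Fin n → Fin m, f (gridCenter n m k) := by
      rw [one_div, ← div_eq_inv_mul, le_div_iff₀ hmn]
      linarith
    linarith
end

section
/- (Edge-vector halving invariant.) Let n ≥ 1 be an integer, θ = 2^{1/n}, and c > 0. Let v ∈ ℝ^n be a vector whose multiset of components equals {c·θ^{−1}, c·θ^{−2}, …, c·θ^{−n}}, and let v′ be obtained from v by replacing its (unique, largest) component of value c·θ^{−1} by c·θ^{−1}/2. Then the multiset of components of v′ equals {c′·θ^{−1}, c′·θ^{−2}, …, c′·θ^{−n}} with c′ = c·θ^{−1}; consequently ‖v′‖ = 2^{−1/n}·‖v‖, where ‖·‖ is the Euclidean norm. -/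
/-- Edge-vector halving invariant: if the multiset of components of `v` is
`{c θ⁻¹, c θ⁻², …, c θ⁻ⁿ}` with `θ = 2^{1/n}`, and `v'` is obtained from `v` by
replacing its largest component `c θ⁻¹` (at index `j`) by `c θ⁻¹ / 2`, then the
multiset of components of `v'` is `{c' θ⁻¹, …, c' θ⁻ⁿ}` with `c' = c θ⁻¹`, and
consequently `‖v'‖ = 2^{-1/n} ‖v‖`. -/
theorem edge_vector_halving (n : ℕ) (hn : 1 ≤ n)
    (θ : ℝ) (hθ : θ = (2 : ℝ) ^ ((1 : ℝ) / n)) (c : ℝ) (hc : 0 < c)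
    (v v' : EuclideanSpace ℝ (Fin n))
    (hv : (Finset.univ.val.map fun i : Fin n => v i)
        = Finset.univ.val.map fun i : Fin n => c * θ ^ (-(((i : ℕ) : ℝ) + 1)))
    (j : Fin n) (hvj : v j = c * θ ^ (-(1 : ℝ)))
    (hv'j : v' j = c * θ ^ (-(1 : ℝ)) / 2)
    (hv'i : ∀ i, i ≠ j → v' i = v i) :
    ((Finset.univ.val.map fun i : Fin n => v' i)
        = Finset.univ.val.map fun i : Fin n =>
            (c * θ ^ (-(1 : ℝ))) * θ ^ (-(((i : ℕ) : ℝ) + 1)))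
      ∧ ‖v'‖ = (2 : ℝ) ^ (-(1 : ℝ) / n) * ‖v‖ := by
  have hn0 : (0:ℝ) < n := by exact_mod_cast hn
  have hθ0 : 0 < θ := hθ ▸ Real.rpow_pos_of_pos (by norm_num) _
  have hθn : θ ^ ((n:ℕ):ℝ) = 2 := by
    rw [hθ, ← Real.rpow_mul (by norm_num), one_div_mul_cancel (ne_of_gt hn0), Real.rpow_one]
  -- value identities
  have hhalf : c * θ ^ (-(((n:ℕ):ℝ) + 1)) = c * θ ^ (-(1:ℝ)) / 2 := by
    rw [neg_add, Real.rpow_add hθ0, Real.rpow_neg hθ0.le, hθn]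
    ring
  have hne : c * θ ^ (-(((n:ℕ):ℝ) + 1)) ≠ c * θ ^ (-(1:ℝ)) := by
    rw [hhalf]
    have h1 : 0 < c * θ ^ (-(1:ℝ)) := mul_pos hc (Real.rpow_pos_of_pos hθ0 _)
    intro h; nlinarith
  -- the two Fin (n+1) decompositions
  set W : Multiset ℝ := Finset.univ.val.map fun i : Fin n => c * θ ^ (-(((i : ℕ) : ℝ) + 1)) with hW
  set W' : Multiset ℝ := Finset.univ.val.map fun i : Fin n =>
      (c * θ ^ (-(1 : ℝ))) * θ ^ (-(((i : ℕ) : ℝ) + 1)) with hW'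
  have hA : (c * θ ^ (-(((n:ℕ):ℝ) + 1))) ::ₘ W = (c * θ ^ (-(1:ℝ))) ::ₘ W' := by
    have h1 : ((Finset.univ.val : Multiset (Fin (n+1))).map
        fun k : Fin (n+1) => c * θ ^ (-(((k : ℕ) : ℝ) + 1)))
        = (c * θ ^ (-(((n:ℕ):ℝ) + 1))) ::ₘ W := by
      rw [Fin.univ_castSuccEmb, Finset.cons_val, Multiset.map_cons, Finset.map_val,
        Multiset.map_map]
      congr 1
    have h2 : ((Finset.univ.val : Multiset (Fin (n+1))).map
        fun k : Fin (n+1) => c * θ ^ (-(((k : ℕ) : ℝ) + 1)))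
        = (c * θ ^ (-(1:ℝ))) ::ₘ W' := by
      rw [Fin.univ_succ, Finset.cons_val, Multiset.map_cons, Finset.map_val,
        Multiset.map_map]
      congr 1
      · norm_num
      · apply Multiset.map_congr rfl
        intro i _
        simp only [Function.comp_apply, Function.Embedding.coeFn_mk, Fin.val_succ]
        rw [mul_assoc, ← Real.rpow_add hθ0]
        push_cast
        ring_nf
    rw [← h1, h2]
  -- decompose univ over Fin n at j
  have hju : (Finset.univ.val : Multiset (Fin n)) = j ::ₘ Finset.univ.val.erase j :=
    (Multiset.cons_erase (by simp)).symm
  have hEv' : Multiset.map v' (Finset.univ.val.erase j) = Multiset.map v (Finset.univ.val.erase j) := by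
    apply Multiset.map_congr rfl
    intro x hx
    exact hv'i x ((Finset.univ.nodup.mem_erase_iff.mp hx).1)
  have hvE : Multiset.map v (Finset.univ.val.erase j) = W.erase (c * θ ^ (-(1:ℝ))) := by
    have := hv
    rw [hju, Multiset.map_cons, hvj] at this
    rw [← this, Multiset.erase_cons_head]
  have part1 : Multiset.map v' (Finset.univ.val : Multiset (Fin n)) = W' := by
    rw [hju, Multiset.map_cons, hv'j, hEv', hvE, ← hhalf]
    have : W' = ((c * θ ^ (-(((n:ℕ):ℝ) + 1))) ::ₘ W).erase (c * θ ^ (-(1:ℝ))) := by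
      rw [hA, Multiset.erase_cons_head]
    rw [this, Multiset.erase_cons_tail _ hne]
  refine ⟨part1, ?_⟩
  -- norms
  have hsum : ∀ (w : EuclideanSpace ℝ (Fin n)) (M : Multiset ℝ),
      Multiset.map w (Finset.univ.val : Multiset (Fin n)) = M →
      ∑ i, w i ^ 2 = (M.map fun x => x ^ 2).sum := by
    intro w M hM
    rw [← hM, Multiset.map_map]
    rfl
  have hsv := hsum v W hv
  have hsv' := hsum v' W' part1
  have hWW' : (W'.map fun x => x ^ 2).sum = (θ ^ (-(1:ℝ)))^2 * (W.map fun x => x ^ 2).sum := by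
    rw [hW, hW', Multiset.map_map, Multiset.map_map, ← Multiset.sum_map_mul_left]
    apply congrArg
    apply Multiset.map_congr rfl
    intro i _
    simp only [Function.comp_apply]
    ring
  have hv'2 : ∑ i, v' i ^ 2 = (θ ^ (-(1:ℝ)))^2 * ∑ i, v i ^ 2 := by
    rw [hsv, hsv', hWW']
  rw [EuclideanSpace.norm_eq, EuclideanSpace.norm_eq]
  simp only [Real.norm_eq_abs, sq_abs]
  rw [hv'2, Real.sqrt_mul (by positivity), Real.sqrt_sq (by positivity)]
  congr 1
  rw [hθ, ← Real.rpow_mul (by norm_num)]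
  congr 1
  ring
end

section
/- (Geometric sum along the splitting schedule.) Let n ≥ 2 and T ≥ 1 be integers. Then Σ_{t=1}^{T} 2^{−⌊log₂ t⌋/n} ≤ (2^{(n−1)/n} / (2^{(n−1)/n} − 1)) · T^{(n−1)/n}, where ⌊log₂ t⌋ denotes the integer part of the base-2 logarithm of t. -/
open scoped BigOperators

/-- Geometric sum along the splitting schedule: for `n ≥ 2` and `T ≥ 1`,
`Σ_{t=1}^T 2^{-⌊log₂ t⌋/n} ≤ (2^{(n-1)/n} / (2^{(n-1)/n} − 1)) · T^{(n-1)/n}`. -/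
theorem splitting_schedule_geometric_sum (n T : ℕ) (hn : 2 ≤ n) (hT : 1 ≤ T) :
    ∑ t ∈ Finset.Icc 1 T, (2 : ℝ) ^ (-((Nat.log 2 t : ℝ)) / n)
      ≤ ((2 : ℝ) ^ (((n : ℝ) - 1) / n) / ((2 : ℝ) ^ (((n : ℝ) - 1) / n) - 1))
          * (T : ℝ) ^ (((n : ℝ) - 1) / n) := by
  have hnR : (0:ℝ) < n := by positivity
  set α : ℝ := ((n : ℝ) - 1) / n with hα
  have hα0 : 0 < α := by
    apply div_pos _ hnR
    have : (2:ℝ) ≤ n := by exact_mod_cast hn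
    linarith
  set q : ℝ := (2 : ℝ) ^ α with hq
  have hq1 : 1 < q := by
    rw [hq]
    exact Real.one_lt_rpow_iff_of_pos (by norm_num) |>.mpr (Or.inl ⟨by norm_num, hα0⟩)
  have hq0 : 0 < q - 1 := by linarith
  -- key: constant value on dyadic blocks
  have hblock : ∀ m : ℕ, ∀ t ∈ Finset.Ico (2^m) (2^(m+1)),
      (2:ℝ) ^ (-((Nat.log 2 t : ℝ)) / n) = (2:ℝ) ^ (-(m:ℝ) / n) := by
    intro m t ht
    rw [Finset.mem_Ico] at ht
    rw [Nat.log_eq_of_pow_le_of_lt_pow ht.1 ht.2]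
  -- term identity : 2^m * 2^(-m/n) = q^m
  have hterm : ∀ m : ℕ, ((2:ℝ)^m) * (2:ℝ) ^ (-(m:ℝ) / n) = q ^ m := by
    intro m
    rw [hq, ← Real.rpow_natCast (2:ℝ) m, ← Real.rpow_natCast ((2:ℝ)^α) m,
      ← Real.rpow_mul (by norm_num : (0:ℝ) ≤ 2),
      ← Real.rpow_add (by norm_num : (0:ℝ) < 2)]
    congr 1
    field_simp [hα]
    rw [hα]; field_simp; ring
  -- dyadic grouping
  have key : ∀ m : ℕ, ∑ t ∈ Finset.Ico 1 (2^(m+1)), (2:ℝ) ^ (-((Nat.log 2 t : ℝ)) / n)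
      = ∑ k ∈ Finset.range (m+1), q ^ k := by
    intro m
    induction m with
    | zero =>
      norm_num [Finset.sum_range_one]
    | succ m ih =>
      have hle : (1:ℕ) ≤ 2^(m+1) := Nat.one_le_two_pow
      have hle2 : (2:ℕ)^(m+1) ≤ 2^(m+2) := Nat.pow_le_pow_right (by norm_num) (by omega)
      rw [← Finset.sum_Ico_consecutive _ hle hle2, ih,
        Finset.sum_congr rfl (hblock (m+1)), Finset.sum_const, Nat.card_Ico,
        Finset.sum_range_succ (n := m+1)]
      congr 1
      have hsub2 : (2:ℕ)^(m+1+1) - 2^(m+1) = 2^(m+1) := by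
        rw [pow_succ, Nat.mul_two, Nat.add_sub_cancel]
      rw [hsub2, nsmul_eq_mul, ← hterm (m+1)]
      push_cast
      ring
  set K := Nat.log 2 T with hK
  have hTpos : T ≠ 0 := by omega
  have h2K : (2:ℕ)^K ≤ T := Nat.pow_log_le_self 2 hTpos
  have hTlt : T < 2^(K+1) := Nat.lt_pow_succ_log_self (by norm_num) T
  -- sum over Icc 1 T ≤ sum over Ico 1 (2^(K+1))
  have hsub : Finset.Icc 1 T ⊆ Finset.Ico 1 (2^(K+1)) := by
    intro x hx
    rw [Finset.mem_Icc] at hx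
    rw [Finset.mem_Ico]
    exact ⟨hx.1, lt_of_le_of_lt hx.2 hTlt⟩
  have step1 : ∑ t ∈ Finset.Icc 1 T, (2:ℝ) ^ (-((Nat.log 2 t : ℝ)) / n)
      ≤ ∑ k ∈ Finset.range (K+1), q ^ k := by
    rw [← key K]
    apply Finset.sum_le_sum_of_subset_of_nonneg hsub
    intro i _ _
    positivity
  have step2 : ∑ k ∈ Finset.range (K+1), q ^ k ≤ q / (q - 1) * (T:ℝ) ^ α := by
    rw [geom_sum_eq (ne_of_gt hq1)]
    have hqK : q ^ K ≤ (T:ℝ) ^ α := by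
      have h1 : q ^ K = ((2:ℝ)^K) ^ α := by
        rw [hq, ← Real.rpow_natCast ((2:ℝ)^α) K, ← Real.rpow_natCast (2:ℝ) K,
          ← Real.rpow_mul (by norm_num : (0:ℝ) ≤ 2),
          ← Real.rpow_mul (by norm_num : (0:ℝ) ≤ 2), mul_comm]
      rw [h1]
      apply Real.rpow_le_rpow (by positivity) _ (le_of_lt hα0)
      exact_mod_cast h2K
    have h2 : q ^ (K+1) - 1 ≤ q * (T:ℝ) ^ α := by
      have hqq : q * q ^ K ≤ q * (T:ℝ) ^ α :=
        mul_le_mul_of_nonneg_left hqK (by linarith)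
      have : q ^ (K+1) = q * q ^ K := by ring
      linarith
    rw [div_mul_eq_mul_div]
    gcongr
  calc _ ≤ _ := step1
    _ ≤ _ := step2
end

section
/- (Minimax lower bound on the average regret.) Let n ≥ 1 and T ≥ 1 be integers and L > 0. Let ω_n denote the Lebesgue measure of the Euclidean unit ball in ℝ^n. Then for any points x_1, …, x_T ∈ [0,1]^n, there exists an L-Lipschitz function f : ℝ^n → ℝ (with respect to the Euclidean norm) such that f(x_t) = 0 for all 1 ≤ t ≤ T and min_{x ∈ [0,1]^n} f(x) ≤ −L·(T·ω_n)^{−1/n}. Consequently, the average regret of these queries satisfies (1/T)·Σ_{t=1}^T f(x_t) − min_{x∈[0,1]^n} f(x) ≥ L·(T·ω_n)^{−1/n}, so no algorithm can beat the rate Ω(L·√n·T^{−1/n}) on all L-Lipschitz objectives; the algorithm's O(L√n·T^{−1/n}) average regret bound is minimax optimal. -/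
open scoped BigOperators
open MeasureTheory Metric

/-- The Lebesgue volume of the Euclidean unit ball in `ℝ^n`. -/
noncomputable def unitBallVolume (n : ℕ) : ℝ :=
  (MeasureTheory.volume (Metric.ball (0 : EuclideanSpace ℝ (Fin n)) 1)).toReal

lemma unitCube_volume (n : ℕ) : volume (unitCube n) = 1 := by
  have h : unitCube n =
      (MeasurableEquiv.toLp 2 (Fin n → ℝ)).symm ⁻¹' (Set.pi Set.univ fun _ => Set.Icc (0:ℝ) 1) := by
    ext y
    simp [unitCube, Set.mem_pi, Pi.le_def,
      forall_and]
  rw [h, (EuclideanSpace.volume_preserving_symm_measurableEquiv_toLp (Fin n)).measure_preimage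
    (MeasurableSet.univ_pi fun _ => measurableSet_Icc).nullMeasurableSet]
  rw [volume_pi_pi]
  simp [Real.volume_Icc]

lemma unitCube_isClosed (n : ℕ) : IsClosed (unitCube n) := by
  have : unitCube n = ⋂ i, (fun y : EuclideanSpace ℝ (Fin n) => y i) ⁻¹' Set.Icc 0 1 := by
    ext y; simp [unitCube]
  rw [this]
  exact isClosed_iInter fun i => isClosed_Icc.preimage (PiLp.continuous_apply 2 (fun _ : Fin n => ℝ) i)

lemma unitCube_not_open (n : ℕ) (hn : 1 ≤ n) : ¬ IsOpen (unitCube n) := by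
  intro h
  have h0 : (0 : EuclideanSpace ℝ (Fin n)) ∈ unitCube n := by
    intro i; simp
  obtain ⟨δ, hδ, hball⟩ := Metric.isOpen_iff.1 h 0 h0
  set i0 : Fin n := ⟨0, hn⟩
  set q : EuclideanSpace ℝ (Fin n) := EuclideanSpace.single i0 (-(δ/2))
  have hq : q ∈ ball (0 : EuclideanSpace ℝ (Fin n)) δ := by
    rw [mem_ball, dist_zero_right]
    rw [show ‖q‖ = ‖(-(δ/2) : ℝ)‖ from EuclideanSpace.norm_single i0 _]
    rw [norm_neg, Real.norm_eq_abs, abs_of_pos (by linarith)]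
    linarith
  have := (hball hq) i0
  rw [show q i0 = -(δ/2) by simp [q, EuclideanSpace.single_apply]] at this
  simp at this
  linarith [this.1]


/-- Minimax lower bound on the average regret: for any `T` query points in `[0,1]^n`
there is an `L`-Lipschitz objective vanishing at all queries whose minimum over the
cube is at most `−L·(T·ω_n)^{-1/n}`; consequently the average regret of those queries
is at least `L·(T·ω_n)^{-1/n}`. -/
theorem minimax_average_regret_lower_bound (n T : ℕ) (hn : 1 ≤ n) (hT : 1 ≤ T)
    (L : ℝ) (hL : 0 < L)
    (x : Fin T → EuclideanSpace ℝ (Fin n)) (hx : ∀ t, x t ∈ unitCube n) :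
    ∃ f : EuclideanSpace ℝ (Fin n) → ℝ,
      (∀ a b : EuclideanSpace ℝ (Fin n), |f a - f b| ≤ L * ‖a - b‖)
      ∧ (∀ t, f (x t) = 0)
      ∧ sInf (f '' unitCube n) ≤ -L * ((T : ℝ) * unitBallVolume n) ^ (-(1 : ℝ) / n)
      ∧ L * ((T : ℝ) * unitBallVolume n) ^ (-(1 : ℝ) / n)
          ≤ (1 / (T : ℝ)) * ∑ t, f (x t) - sInf (f '' unitCube n) := by
  haveI : Nontrivial (EuclideanSpace ℝ (Fin n)) :=
    ⟨0, EuclideanSpace.single ⟨0, hn⟩ 1, by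
      intro h
      have := congrArg (fun y : EuclideanSpace ℝ (Fin n) => y ⟨0, hn⟩) h
      simp [EuclideanSpace.single_apply] at this⟩
  set ωe : ENNReal := volume (ball (0 : EuclideanSpace ℝ (Fin n)) 1) with hωe
  have hωe_pos : 0 < ωe := measure_ball_pos _ _ one_pos
  have hωe_top : ωe ≠ ⊤ := measure_ball_lt_top.ne
  have hω_pos : 0 < unitBallVolume n := ENNReal.toReal_pos hωe_pos.ne' hωe_top
  have hT0 : (0:ℝ) < T := by exact_mod_cast hT
  set b : ℝ := (T : ℝ) * unitBallVolume n with hb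
  have hb_pos : 0 < b := mul_pos hT0 hω_pos
  set ε : ℝ := b ^ (-(1 : ℝ) / n) with hε
  have hε_pos : 0 < ε := Real.rpow_pos_of_pos hb_pos _
  have hn0 : (n:ℝ) ≠ 0 := by positivity
  have hεn : ε ^ n = b⁻¹ := by
    rw [hε, ← Real.rpow_natCast (b ^ (-(1:ℝ)/n)) n, ← Real.rpow_mul hb_pos.le]
    rw [div_mul_cancel₀ _ hn0, Real.rpow_neg_one]
  -- find a point of the cube far from all queries
  have hexists : ∃ y ∈ unitCube n, ∀ t, ε ≤ dist y (x t) := by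
    by_contra hcon
    push_neg at hcon
    set U : Set (EuclideanSpace ℝ (Fin n)) := ⋃ t, ball (x t) ε with hU
    have hsub : unitCube n ⊆ U := by
      intro y hy
      obtain ⟨t, ht⟩ := hcon y hy
      exact Set.mem_iUnion.2 ⟨t, by rwa [mem_ball]⟩
    have hUopen : IsOpen U := isOpen_iUnion fun t => isOpen_ball
    have hμball : ∀ t, volume (ball (x t) ε) = ENNReal.ofReal b⁻¹ * ωe := by
      intro t
      rw [Measure.addHaar_ball _ _ hε_pos.le, finrank_euclideanSpace, Fintype.card_fin, hεn]
    have hμU_le : volume U ≤ 1 := by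
      calc volume U ≤ ∑ t : Fin T, volume (ball (x t) ε) := measure_iUnion_fintype_le _ _
        _ = (T : ENNReal) * (ENNReal.ofReal b⁻¹ * ωe) := by
            simp [hμball, Finset.sum_const, nsmul_eq_mul]
        _ = 1 := by
            have hc0 : ((T:ENNReal) * ωe) ≠ 0 :=
              mul_ne_zero (Nat.cast_ne_zero.2 (by omega)) hωe_pos.ne'
            have hct : ((T:ENNReal) * ωe) ≠ ⊤ :=
              ENNReal.mul_ne_top (ENNReal.natCast_ne_top T) hωe_top
            have hofb : ENNReal.ofReal b = (T:ENNReal) * ωe := by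
              rw [hb, ENNReal.ofReal_mul hT0.le, ENNReal.ofReal_natCast]
              congr 1
              exact ENNReal.ofReal_toReal hωe_top
            rw [ENNReal.ofReal_inv_of_pos hb_pos, hofb,
              show (T:ENNReal) * (((T:ENNReal)*ωe)⁻¹ * ωe) = ((T:ENNReal)*ωe) * ((T:ENNReal)*ωe)⁻¹ by ring,
              ENNReal.mul_inv_cancel hc0 hct]
    have hdiff : volume (U \ unitCube n) = 0 := by
      have hmeas : NullMeasurableSet (unitCube n) volume :=
        (unitCube_isClosed n).measurableSet.nullMeasurableSet
      have : volume (U \ unitCube n) = volume U - volume (unitCube n) :=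
        measure_diff hsub hmeas (by rw [unitCube_volume]; exact ENNReal.one_ne_top)
      rw [this, unitCube_volume]
      exact tsub_eq_zero_of_le hμU_le
    have hUsub : U ⊆ unitCube n := by
      by_contra hns
      obtain ⟨y, hyU, hyc⟩ := Set.not_subset.1 hns
      have hopen : IsOpen (U \ unitCube n) := hUopen.sdiff (unitCube_isClosed n)
      have : 0 < volume (U \ unitCube n) := hopen.measure_pos _ ⟨y, hyU, hyc⟩
      rw [hdiff] at this; exact lt_irrefl _ this
    have : U = unitCube n := le_antisymm hUsub hsub
    exact unitCube_not_open n hn (this ▸ hUopen)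
  obtain ⟨y, hy, hyfar⟩ := hexists
  refine ⟨fun z => -L * max (ε - dist z y) 0, ?_, ?_, ?_, ?_⟩
  · intro a c
    have h1 : |max (ε - dist a y) 0 - max (ε - dist c y) 0|
        ≤ |(ε - dist a y) - (ε - dist c y)| := abs_max_sub_max_le_abs _ _ _
    have h2 : |(ε - dist a y) - (ε - dist c y)| ≤ dist a c := by
      rw [show (ε - dist a y) - (ε - dist c y) = -(dist a y - dist c y) by ring, abs_neg]
      exact abs_dist_sub_le a c y
    have h3 : |(-L * max (ε - dist a y) 0) - (-L * max (ε - dist c y) 0)|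
        = L * |max (ε - dist a y) 0 - max (ε - dist c y) 0| := by
      rw [show (-L * max (ε - dist a y) 0) - (-L * max (ε - dist c y) 0)
        = -L * (max (ε - dist a y) 0 - max (ε - dist c y) 0) by ring, abs_mul, abs_neg,
        abs_of_pos hL]
    rw [h3, ← dist_eq_norm]
    exact mul_le_mul_of_nonneg_left (h1.trans h2) hL.le
  · intro t
    have : ε - dist (x t) y ≤ 0 := by
      have := hyfar t
      rw [dist_comm] at this
      linarith
    show -L * max (ε - dist (x t) y) 0 = 0
    rw [max_eq_right this, mul_zero]
  · have hbdd : BddBelow ((fun z => -L * max (ε - dist z y) 0) '' unitCube n) := by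
      refine ⟨-L * ε, ?_⟩
      rintro v ⟨z, _, rfl⟩
      have h1 : max (ε - dist z y) 0 ≤ ε :=
        max_le (by linarith [dist_nonneg (x := z) (y := y)]) hε_pos.le
      show -L * ε ≤ -L * max (ε - dist z y) 0
      nlinarith
    have hmem : -L * ε ∈ (fun z => -L * max (ε - dist z y) 0) '' unitCube n := by
      refine ⟨y, hy, ?_⟩
      show -L * max (ε - dist y y) 0 = -L * ε
      rw [dist_self, sub_zero, max_eq_left hε_pos.le]
    exact csInf_le hbdd hmem
  · have hzero : ∀ t, (fun z => -L * max (ε - dist z y) 0) (x t) = 0 := by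
      intro t
      have : ε - dist (x t) y ≤ 0 := by
        have := hyfar t; rw [dist_comm] at this; linarith
      show -L * max (ε - dist (x t) y) 0 = 0
      rw [max_eq_right this, mul_zero]
    have hsum : ∑ t, (fun z => -L * max (ε - dist z y) 0) (x t) = 0 := by
      simp only [hzero, Finset.sum_const_zero]
    rw [hsum, mul_zero, zero_sub]
    have hbdd : BddBelow ((fun z => -L * max (ε - dist z y) 0) '' unitCube n) := by
      refine ⟨-L * ε, ?_⟩
      rintro v ⟨z, _, rfl⟩
      have h1 : max (ε - dist z y) 0 ≤ ε :=
        max_le (by linarith [dist_nonneg (x := z) (y := y)]) hε_pos.le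
      show -L * ε ≤ -L * max (ε - dist z y) 0
      nlinarith
    have hmem : -L * ε ∈ (fun z => -L * max (ε - dist z y) 0) '' unitCube n := by
      refine ⟨y, hy, ?_⟩
      show -L * max (ε - dist y y) 0 = -L * ε
      rw [dist_self, sub_zero, max_eq_left hε_pos.le]
    have := csInf_le hbdd hmem
    linarith
end
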